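/- Let H = ℍ_n ⊕ ℍ_n (orthogonal direct sum of two copies of the hyperbolic group of rank n) and let φ: H → H be the swap map (a,b) ↦ (b,a). Then φ lies in the subgroup of Sp(H) generated by transvections. -/

import Mathlib

/-- omega_n = e^{2 pi i/n} as a unit of the complex numbers. -/
noncomputable def omegaU (n : ℕ) : ℂˣ :=
  Units.mk0 (Complex.exp (2 * Real.pi * Complex.I / n)) (Complex.exp_ne_zero _)

/-- Z-bilinearity of a pairing into the unit group of the complex numbers. -/
def IsBilinPairing {H : Type*} [AddCommGroup H] (f : H → H → ℂˣ) : Prop :=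
  (∀ a b c : H, f (a + b) c = f a c * f b c) ∧ (∀ a b c : H, f a (b + c) = f a b * f a c)

/-- Antisymmetry: <a,b> = <b,a>⁻¹. -/
def IsAntisymmPairing {H : Type*} [AddCommGroup H] (f : H → H → ℂˣ) : Prop :=
  ∀ a b : H, f a b = (f b a)⁻¹

/-- Nonsingularity of a pairing: <a,b> = 1 for all b implies a = 0. -/
def IsNonsingularPairing {H : Type*} [AddCommGroup H] (f : H → H → ℂˣ) : Prop :=
  ∀ a : H, (∀ b : H, f a b = 1) → a = 0

/-- The standard pairing on the hyperbolic group H_n = Z/n × Z/n: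
<(i,j),(k,l)> = omega_n^{il - jk}. -/
noncomputable def hypPair (n : ℕ) (a b : ZMod n × ZMod n) : ℂˣ :=
  omegaU n ^ (a.1 * b.2 - a.2 * b.1).val

/-- The (multiplicative) group structure on additive automorphisms, as in the older Mathlib. -/
instance AddAut.group {A : Type*} [Add A] : Group (AddAut A) where
  mul g h := AddEquiv.trans h g
  one := AddEquiv.refl _
  inv := AddEquiv.symm
  mul_assoc _ _ _ := rfl
  one_mul _ := rfl
  mul_one _ := rfl
  inv_mul_cancel := AddEquiv.self_trans_symm

/-- The isometry group Sp(H) of a pairing, as a subgroup of the automorphism group. -/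
def SpGroup {H : Type*} [AddCommGroup H] (f : H → H → ℂˣ) : Subgroup (AddAut H) where
  carrier := {e | ∀ a b : H, f (e a) (e b) = f a b}
  one_mem' := fun _ _ => rfl
  mul_mem' := by
    intro e g he hg a b
    have h1 : ∀ x, (e * g) x = e (g x) := fun x => rfl
    rw [h1, h1, he, hg]
  inv_mem' := by
    intro e he a b
    have := he (e⁻¹ a) (e⁻¹ b)
    have h2 : ∀ x, e (e⁻¹ x) = x := fun x => e.apply_symm_apply x
    rw [h2, h2] at this
    exact this.symm

/-- e is a transvection s_{b,k} for the pairing f: for some nonzero b and k ∈ ℤ,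
e sends a to a - k·j(a)·b where <b,a> = ω_m^{j(a)} and m is the order of b. -/
def IsTransvection {H : Type*} [AddCommGroup H] (f : H → H → ℂˣ) (e : AddAut H) : Prop :=
  ∃ b : H, b ≠ 0 ∧ ∃ k : ℤ, ∀ a : H, ∃ j : ℤ,
    f b a = omegaU (addOrderOf b) ^ j ∧ e a = a - (k * j) • b

/-- e is a transvection s_b (with k = 1) for the pairing f. -/
def IsTransvection1 {H : Type*} [AddCommGroup H] (f : H → H → ℂˣ) (e : AddAut H) : Prop :=
  ∃ b : H, b ≠ 0 ∧ ∀ a : H, ∃ j : ℤ,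
    f b a = omegaU (addOrderOf b) ^ j ∧ e a = a - j • b

/-- The product pairing on H_n ⊕ H_n. -/
noncomputable def prodPair (n : ℕ)
    (a b : (ZMod n × ZMod n) × (ZMod n × ZMod n)) : ℂˣ :=
  hypPair n a.1 b.1 * hypPair n a.2 b.2

abbrev HH (n : ℕ) := (ZMod n × ZMod n) × (ZMod n × ZMod n)

def Bf (n : ℕ) (b a : HH n) : ZMod n :=
  (b.1.1 * a.1.2 - b.1.2 * a.1.1) + (b.2.1 * a.2.2 - b.2.2 * a.2.1)

lemma Bf_add (n : ℕ) (b a a' : HH n) : Bf n b (a + a') = Bf n b a + Bf n b a' := by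
  simp only [Bf, Prod.fst_add, Prod.snd_add]
  ring

lemma Bf_self (n : ℕ) (b : HH n) : Bf n b b = 0 := by
  simp only [Bf]; ring

lemma Bf_smul (n : ℕ) (b : HH n) (c : ZMod n) (a : HH n) :
    Bf n b (c • a) = c * Bf n b a := by
  simp only [Bf, Prod.smul_fst, Prod.smul_snd, smul_eq_mul]
  ring

def Tv (n : ℕ) (b : HH n) : AddAut (HH n) where
  toFun a := a + Bf n b a • b
  invFun a := a - Bf n b a • b
  left_inv a := by
    simp only [Bf_add, Bf_smul, Bf_self, mul_zero, add_zero]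
    abel
  right_inv a := by
    have : Bf n b (a - Bf n b a • b) = Bf n b a := by
      have := Bf_add n b (a - Bf n b a • b) (Bf n b a • b)
      simp only [sub_add_cancel, Bf_smul, Bf_self, mul_zero, add_zero] at this
      simpa using this.symm
    show (a - Bf n b a • b) + Bf n b (a - Bf n b a • b) • b = a
    rw [this]; abel
  map_add' a a' := by
    simp only [Bf_add, add_smul]
    abel

lemma omegaU_pow_n (n : ℕ) (hn : 0 < n) : omegaU n ^ n = 1 := by
  have hne : (n : ℂ) ≠ 0 := Nat.cast_ne_zero.mpr hn.ne'
  ext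
  show Complex.exp (2 * Real.pi * Complex.I / n) ^ n = 1
  rw [← Complex.exp_nat_mul]
  have : (n : ℂ) * (2 * Real.pi * Complex.I / n) = 2 * Real.pi * Complex.I := by
    field_simp
  rw [this, Complex.exp_two_pi_mul_I]

lemma omegaU_pow_mod (n : ℕ) (hn : 0 < n) (m : ℕ) :
    omegaU n ^ (m % n) = omegaU n ^ m := by
  conv_rhs => rw [← Nat.div_add_mod m n]
  rw [pow_add, pow_mul, omegaU_pow_n n hn, one_pow, one_mul]

lemma omegaU_val_add (n : ℕ) (hn : 0 < n) (v w : ZMod n) :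
    omegaU n ^ (v + w).val = omegaU n ^ v.val * omegaU n ^ w.val := by
  haveI : NeZero n := ⟨hn.ne'⟩
  rw [ZMod.val_add, omegaU_pow_mod n hn, pow_add]

lemma addOrderOf_eq (n : ℕ) (hn : 0 < n) (b : HH n)
    (h : b.1.1 = 1 ∨ b.1.2 = 1) : addOrderOf b = n := by
  haveI : NeZero n := ⟨hn.ne'⟩
  have hsm : ∀ x : ZMod n, n • x = 0 := fun x => by
    rw [nsmul_eq_mul, ZMod.natCast_self, zero_mul]
  apply Nat.dvd_antisymm
  · rw [addOrderOf_dvd_iff_nsmul_eq_zero]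
    refine Prod.ext (Prod.ext ?_ ?_) (Prod.ext ?_ ?_) <;> simp [hsm]
  · have h0 : addOrderOf b • b = 0 := addOrderOf_nsmul_eq_zero b
    rcases h with h | h
    · have : addOrderOf b • b.1.1 = 0 := by
        rw [← Prod.smul_fst, ← Prod.smul_fst, h0]; rfl
      rw [h, nsmul_eq_mul, mul_one] at this
      exact (ZMod.natCast_eq_zero_iff _ _).mp this
    · have : addOrderOf b • b.1.2 = 0 := by
        rw [← Prod.smul_snd, ← Prod.smul_fst, h0]; rfl
      rw [h, nsmul_eq_mul, mul_one] at this
      exact (ZMod.natCast_eq_zero_iff _ _).mp this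

lemma Tv_isTransvection (n : ℕ) (hn : 1 < n) (b : HH n)
    (h : b.1.1 = 1 ∨ b.1.2 = 1) : IsTransvection (prodPair n) (Tv n b) := by
  haveI : NeZero n := ⟨(Nat.one_pos.trans hn).ne'⟩
  haveI : Fact (1 < n) := ⟨hn⟩
  have hn0 : 0 < n := Nat.one_pos.trans hn
  refine ⟨b, ?_, -1, fun a => ?_⟩
  · intro hb
    rcases h with h | h <;> rw [hb] at h <;> exact one_ne_zero h.symm
  · refine ⟨((Bf n b a).val : ℤ), ?_, ?_⟩
    · rw [addOrderOf_eq n hn0 b h, zpow_natCast]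
      rw [prodPair, hypPair, hypPair, ← omegaU_val_add n hn0]
      rfl
    · show a + Bf n b a • b = a - (-1 * ((Bf n b a).val : ℤ)) • b
      rw [neg_one_mul, neg_smul, sub_neg_eq_add]
      congr 1
      rw [natCast_zsmul, ← Nat.cast_smul_eq_nsmul (ZMod n), ZMod.natCast_val, ZMod.cast_id]

lemma swap_eq_prod (n : ℕ) :
    (AddEquiv.prodComm : HH n ≃+ HH n) =
      (Tv n ((1,1),(-1,-1)) * Tv n ((1,0),(-1,0)) * Tv n ((0,1),(0,-1)) : AddAut (HH n)) := by
  apply DFunLike.ext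
  rintro ⟨⟨a1, a2⟩, ⟨a3, a4⟩⟩
  show ((a3, a4), (a1, a2)) =
    (Tv n ((1,1),(-1,-1))) ((Tv n ((1,0),(-1,0))) ((Tv n ((0,1),(0,-1))) ((a1,a2),(a3,a4))))
  simp only [Tv, Bf, AddEquiv.coe_mk, Equiv.coe_fn_mk, Prod.smul_mk, smul_eq_mul,
    Prod.mk_add_mk, Prod.mk.injEq]
  refine ⟨⟨?_, ?_⟩, ?_, ?_⟩ <;> ring

/-- The swap map (a,b) ↦ (b,a) on H_n ⊕ H_n lies in the subgroup Q(H) generated by the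
transvections. -/
theorem stmt12 (n : ℕ) (hn : 0 < n) :
    (AddEquiv.prodComm :
        ((ZMod n × ZMod n) × (ZMod n × ZMod n)) ≃+ ((ZMod n × ZMod n) × (ZMod n × ZMod n)))
      ∈ Subgroup.closure
        {e : AddAut ((ZMod n × ZMod n) × (ZMod n × ZMod n)) |
          IsTransvection (prodPair n) e} := by
  rcases Nat.lt_or_ge n 2 with h | h
  · have hn1 : n = 1 := by omega
    subst hn1
    have : (AddEquiv.prodComm :
        ((ZMod 1 × ZMod 1) × (ZMod 1 × ZMod 1)) ≃+ ((ZMod 1 × ZMod 1) × (ZMod 1 × ZMod 1))) = 1 := by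
      apply DFunLike.ext
      intro a
      exact Subsingleton.elim _ _
    rw [this]
    exact one_mem _
  · have h1 : (1 : ℕ) < n := h
    rw [show (AddEquiv.prodComm :
        ((ZMod n × ZMod n) × (ZMod n × ZMod n)) ≃+ ((ZMod n × ZMod n) × (ZMod n × ZMod n))) =
        (AddEquiv.prodComm : HH n ≃+ HH n) from rfl, swap_eq_prod n]
    exact mul_mem (mul_mem
      (Subgroup.subset_closure (Tv_isTransvection n h1 _ (Or.inl rfl)))
      (Subgroup.subset_closure (Tv_isTransvection n h1 _ (Or.inl rfl))))
      (Subgroup.subset_closure (Tv_isTransvection n h1 _ (Or.inr rfl)))
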